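/- Let ν be an admissible profile whose support interval [α_min, α_max) is nonempty, and suppose the convexity index p₀ := min(1, inf{D⁺ν(α) : α_min ≤ α < α_max}) satisfies p₀ < p ≤ 1. Then there exist ε > 0 and α_min ≤ α < α' < α_max with ν(α') + ε < 1 and ν(α') - ν(α) + ε < p(α' - α), and moreover ε and s := α' - α can be chosen so that (p/(p+1))(s + ν(α') - ν(α) + ε) < 1 - ν(α). -/
import Mathlib


noncomputable section
open Filter Set Topology

/-- Right-inf derivative of an extended-real-valued profile. -/
def rightInfDeriv (ν : ℝ → EReal) (a : ℝ) : EReal :=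
  Filter.liminf (fun h : ℝ => ((((ν (a + h)).toReal - (ν a).toReal) / h : ℝ) : EReal))
    (nhdsWithin 0 (Set.Ioi 0))

/-- `α_min = inf{α : ν(α) ≥ 0}` as an extended real. -/
def alphaMin (ν : ℝ → EReal) : EReal :=
  sInf ((fun a : ℝ => (a : EReal)) '' {a : ℝ | 0 ≤ ν a})

/-- `α_max = inf{α : ν(α) = 1}` as an extended real (`inf ∅ = +∞`). -/
def alphaMax (ν : ℝ → EReal) : EReal :=
  sInf ((fun a : ℝ => (a : EReal)) '' {a : ℝ | ν a = 1})

/-- The convexity index `p₀ = min(1, inf{D⁺ν(α) : α_min ≤ α < α_max})`. -/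
def convIndex (ν : ℝ → EReal) : EReal :=
  min 1 (sInf {d : EReal | ∃ a : ℝ, alphaMin ν ≤ (a : EReal) ∧ (a : EReal) < alphaMax ν ∧
    d = rightInfDeriv ν a})

theorem stmt19 (ν : ℝ → EReal)
    (hmono : Monotone ν)
    (hrc : ∀ a : ℝ, ContinuousWithinAt ν (Set.Ici a) a)
    (hval : ∀ a : ℝ, ν a = ⊥ ∨ (0 ≤ ν a ∧ ν a ≤ 1))
    (hne : ∃ a : ℝ, ν a ≠ ⊥)
    (hint : alphaMin ν < alphaMax ν)
    (p : ℝ) (hp0 : convIndex ν < (p : EReal)) (hp1 : p ≤ 1) :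
    ∃ ε : ℝ, 0 < ε ∧ ∃ α α' : ℝ,
      alphaMin ν ≤ (α : EReal) ∧ α < α' ∧ (α' : EReal) < alphaMax ν ∧
      (ν α').toReal + ε < 1 ∧
      (ν α').toReal - (ν α).toReal + ε < p * (α' - α) ∧
      (p / (p + 1)) * ((α' - α) + ((ν α').toReal - (ν α).toReal + ε)) < 1 - (ν α).toReal := by
  have hone : (1 : EReal) ≠ ⊤ := by
    rw [show (1 : EReal) = ((1 : ℝ) : EReal) by norm_num]; exact EReal.coe_ne_top 1
  have hnetop : ∀ x : ℝ, ν x ≠ ⊤ := by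
    intro x
    rcases hval x with h | ⟨_, h1⟩
    · simp [h]
    · intro ht; rw [ht] at h1; exact hone (top_le_iff.mp h1)
  have htnonneg : ∀ x : ℝ, 0 ≤ (ν x).toReal := by
    intro x
    rcases hval x with h | ⟨h0, _⟩
    · simp [h]
    · have := EReal.toReal_le_toReal h0 (by simp) (hnetop x)
      simpa using this
  have hmt : ∀ x y : ℝ, x ≤ y → (ν x).toReal ≤ (ν y).toReal := by
    intro x y hxy
    rcases hval x with h | ⟨h0, h1⟩
    · simpa [h] using htnonneg y
    · refine EReal.toReal_le_toReal (hmono hxy) ?_ (hnetop y)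
      intro hb; rw [hb] at h0; exact absurd h0 (by simp)
  have hlt1 : ∀ x : ℝ, (x : EReal) < alphaMax ν → (ν x).toReal < 1 := by
    intro x hx
    have hne1 : ν x ≠ 1 := by
      intro h1
      have : alphaMax ν ≤ (x : EReal) :=
        sInf_le ⟨x, by simpa using h1, rfl⟩
      exact absurd (lt_of_lt_of_le hx this) (lt_irrefl _)
    rcases hval x with h | ⟨h0, h1⟩
    · simp [h]
    · have hb : ν x ≠ ⊥ := by intro hb; rw [hb] at h0; exact absurd h0 (by simp)
      have hle := EReal.toReal_le_toReal h1 hb hone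
      rw [EReal.toReal_one] at hle
      rcases eq_or_lt_of_le hle with he | hl
      · exfalso
        apply hne1
        have hx' : ν x = ((ν x).toReal : EReal) := (EReal.coe_toReal (hnetop x) hb).symm
        rw [hx', he]; norm_num
      · exact hl
  -- extract a with small right derivative
  have hpE : (p : EReal) ≤ 1 := by exact_mod_cast hp1
  have hS : sInf {d : EReal | ∃ a : ℝ, alphaMin ν ≤ (a : EReal) ∧ (a : EReal) < alphaMax ν ∧
      d = rightInfDeriv ν a} < (p : EReal) := by
    rcases min_lt_iff.mp hp0 with h | h
    · exact absurd h (not_lt.mpr hpE)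
    · exact h
  rw [sInf_lt_iff] at hS
  obtain ⟨d, ⟨a, hamin, hamax, rfl⟩, hd⟩ := hS
  have hfreq : ∃ᶠ h in nhdsWithin (0:ℝ) (Set.Ioi 0),
      ((ν (a + h)).toReal - (ν a).toReal) / h < p := by
    by_contra hcon
    rw [Filter.not_frequently] at hcon
    have hev : ∀ᶠ h in nhdsWithin (0:ℝ) (Set.Ioi 0),
        (p : EReal) ≤ ((((ν (a + h)).toReal - (ν a).toReal) / h : ℝ) : EReal) := by
      filter_upwards [hcon] with h hh
      exact_mod_cast not_lt.mp hh
    have : (p : EReal) ≤ rightInfDeriv ν a := Filter.le_liminf_of_le (by isBoundedDefault) hev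
    exact absurd (lt_of_le_of_lt this hd) (lt_irrefl _)
  obtain ⟨b, hab, hbmax⟩ := EReal.exists_between_coe_real hamax
  have hab' : (0:ℝ) < b - a := by
    have : (a : ℝ) < b := by exact_mod_cast hab
    linarith
  have hta1 : (ν a).toReal < 1 := hlt1 a hamax
  set δ : ℝ := min (b - a) (1 - (ν a).toReal) with hδ
  have hδpos : 0 < δ := lt_min hab' (by linarith)
  have hev : ∀ᶠ h in nhdsWithin (0:ℝ) (Set.Ioi 0), h ∈ Set.Ioo (0:ℝ) δ :=
    Ioo_mem_nhdsGT_of_mem ⟨le_refl _, hδpos⟩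
  obtain ⟨h, hq, hh0, hδ'⟩ := (hfreq.and_eventually hev).exists
  have hhb : h < b - a := lt_of_lt_of_le hδ' (min_le_left _ _)
  have hh1 : h < 1 - (ν a).toReal := lt_of_lt_of_le hδ' (min_le_right _ _)
  set t := (ν a).toReal with htdef
  set t' := (ν (a + h)).toReal with ht'
  have hΔnn : 0 ≤ t' - t := sub_nonneg.mpr (hmt a (a + h) (by linarith))
  have hΔ : t' - t < p * h := (div_lt_iff₀ hh0).mp hq
  have hppos : 0 < p := by nlinarith
  have hmax' : ((a + h : ℝ) : EReal) < alphaMax ν :=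
    lt_of_lt_of_le (by exact_mod_cast (show a + h < b by linarith)) (le_of_lt hbmax)
  have ht'1 : t' < 1 := hlt1 (a + h) hmax'
  set ε : ℝ := min (p * h - (t' - t)) (1 - t') / 2 with hε
  have hεpos : 0 < ε := by
    apply div_pos _ (by norm_num)
    exact lt_min (by linarith) (by linarith)
  have hε1 : ε < 1 - t' := by
    have := min_le_right (p * h - (t' - t)) (1 - t')
    rw [hε]; linarith
  have hε2 : ε < p * h - (t' - t) := by
    have := min_le_left (p * h - (t' - t)) (1 - t')
    rw [hε]; linarith
  refine ⟨ε, hεpos, a, a + h, hamin, by linarith, hmax', by linarith, ?_, ?_⟩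
  · have hae : (a + h) - a = h := by ring
    rw [hae]; linarith
  · have hae : (a + h) - a = h := by ring
    rw [hae]
    have hp1' : 0 < p + 1 := by linarith
    have key : p / (p + 1) * (h + (t' - t + ε)) < p / (p + 1) * (h + p * h) :=
      mul_lt_mul_of_pos_left (by linarith) (div_pos hppos hp1')
    have keq : p / (p + 1) * (h + p * h) = p * h := by
      field_simp; ring
    have hph : p * h ≤ h := by nlinarith
    linarith [key, keq ▸ key]
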